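/- For every integer n ≥ 1, the number of subsets of an n-element set of size at most n/3 satisfies ∑_{i=0}^{⌊n/3⌋} C(n, i) < 1.89^n, where C(n, i) denotes the binomial coefficient. -/

import Mathlib

open Finset

/-- For every `n ≥ 1`, the number of subsets of an `n`-element set of size at
most `n/3` satisfies `∑_{i=0}^{⌊n/3⌋} C(n, i) < 1.89 ^ n`. -/
theorem stmt9 (n : ℕ) (hn : 1 ≤ n) :
    (∑ i ∈ Finset.range (n / 3 + 1), (n.choose i : ℝ)) < 1.89 ^ n := by
  set k := n / 3 with hk
  have hk3 : 3 * k ≤ n := by omega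
  have hS : (∑ i ∈ Finset.range (k + 1), (n.choose i : ℝ)) * (1/2) ^ k ≤ (3/2) ^ n := by
    calc (∑ i ∈ Finset.range (k + 1), (n.choose i : ℝ)) * (1/2) ^ k
        = ∑ i ∈ Finset.range (k + 1), (n.choose i : ℝ) * (1/2) ^ k := by
          rw [Finset.sum_mul]
      _ ≤ ∑ i ∈ Finset.range (k + 1), (n.choose i : ℝ) * (1/2) ^ i := by
          apply Finset.sum_le_sum
          intro i hi
          have hik : i ≤ k := by simpa [Nat.lt_succ_iff] using hi
          have : ((1:ℝ)/2) ^ k ≤ (1/2) ^ i :=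
            pow_le_pow_of_le_one (by norm_num) (by norm_num) hik
          exact mul_le_mul_of_nonneg_left this (by positivity)
      _ ≤ ∑ i ∈ Finset.range (n + 1), (n.choose i : ℝ) * (1/2) ^ i := by
          apply Finset.sum_le_sum_of_subset_of_nonneg
          · exact Finset.range_subset_range.mpr (by omega)
          · intro i _ _; positivity
      _ = (3/2) ^ n := by
          have h := add_pow (1/2 : ℝ) 1 n
          rw [show (3:ℝ)/2 = 1/2 + 1 by norm_num, h]
          apply Finset.sum_congr rfl
          intro i _
          ring
  have hS2 : (∑ i ∈ Finset.range (k + 1), (n.choose i : ℝ)) ≤ (3/2) ^ n * 2 ^ k := by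
    have h := mul_le_mul_of_nonneg_right hS (by positivity : (0:ℝ) ≤ 2 ^ k)
    calc (∑ i ∈ Finset.range (k + 1), (n.choose i : ℝ))
        = (∑ i ∈ Finset.range (k + 1), (n.choose i : ℝ)) * (1/2) ^ k * 2 ^ k := by
          rw [mul_assoc, ← mul_pow]; norm_num
      _ ≤ (3/2) ^ n * 2 ^ k := h
  refine lt_of_le_of_lt hS2 ?_
  have hb : (0:ℝ) ≤ (1.89:ℝ) ^ n := by positivity
  refine lt_of_pow_lt_pow_left₀ 3 hb ?_
  calc ((3/2 : ℝ) ^ n * 2 ^ k) ^ 3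
      = (27/8) ^ n * 2 ^ (3 * k) := by
        rw [mul_pow, ← pow_mul, ← pow_mul, show (27:ℝ)/8 = (3/2)^3 by norm_num,
          ← pow_mul, mul_comm n 3, mul_comm k 3]
    _ ≤ (27/8) ^ n * 2 ^ n := by
        apply mul_le_mul_of_nonneg_left _ (by positivity)
        exact pow_le_pow_right₀ (by norm_num) hk3
    _ = (27/4) ^ n := by
        rw [← mul_pow]; norm_num
    _ < (1.89 ^ n) ^ 3 := by
        rw [← pow_mul, mul_comm n 3, pow_mul]
        apply pow_lt_pow_left₀ (by norm_num) (by positivity)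
        omega
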